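/- (Proposition 3: reversing symmetry) Let r > 0 and σ > 0, let F(x, p, y) = ((x + y)² − 1 + σ²p, −2(x + y)p, r·y·(3 − y)), and let T : ℝ³ → ℝ³ be the affine map T(x, p, y) = (−x − 3, p, 3 − y). Then for every v = (x, p, y) ∈ ℝ³, F(T(v)) = (F₁(v), −F₂(v), F₃(v)), where F₁, F₂, F₃ are the components of F. Consequently, if γ : ℝ → ℝ³ is a solution of the system ẋ = (x + y)² − 1 + σ²p, ṗ = −2(x + y)p, ẏ = r·y·(3 − y), then the curve η(t) = T(γ(−t)) is also a solution of the same system. -/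

import Mathlib

/-- Reversing symmetry (Proposition 3): with
`F(x, p, y) = ((x + y)² − 1 + σ²p, −2(x + y)p, r·y·(3 − y))` and the affine map
`T(x, p, y) = (−x − 3, p, 3 − y)`, one has `F(T(v)) = (F₁(v), −F₂(v), F₃(v))` for every
`v ∈ ℝ³`; consequently, if `γ` is a solution of the most probable path system, then
`η(t) = T(γ(−t))` is also a solution of the same system. -/
theorem reversing_symmetry (r σ : ℝ) (hr : 0 < r) (hσ : 0 < σ) :
    let F : ℝ × ℝ × ℝ → ℝ × ℝ × ℝ := fun v =>
      ((v.1 + v.2.2) ^ 2 - 1 + σ ^ 2 * v.2.1, -2 * (v.1 + v.2.2) * v.2.1,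
        r * v.2.2 * (3 - v.2.2))
    let T : ℝ × ℝ × ℝ → ℝ × ℝ × ℝ := fun v => (-v.1 - 3, v.2.1, 3 - v.2.2)
    (∀ v : ℝ × ℝ × ℝ, F (T v) = ((F v).1, -(F v).2.1, (F v).2.2)) ∧
    (∀ γ : ℝ → ℝ × ℝ × ℝ, (∀ t : ℝ, HasDerivAt γ (F (γ t)) t) →
      ∀ t : ℝ, HasDerivAt (fun t => T (γ (-t))) (F (T (γ (-t)))) t) := by
  intro F T
  have hsym : ∀ v : ℝ × ℝ × ℝ, F (T v) = ((F v).1, -(F v).2.1, (F v).2.2) := by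
    intro v
    simp only [F, T, Prod.mk.injEq]
    refine ⟨by ring, by ring, by ring⟩
  refine ⟨hsym, ?_⟩
  intro γ hγ t
  have hneg : HasDerivAt (fun s : ℝ => γ (-s)) (-(F (γ (-t)))) t := by
    have := (hγ (-t)).scomp t (hasDerivAt_neg t)
    simpa [Function.comp_def] using this
  have h1 : HasDerivAt (fun s : ℝ => -(γ (-s)).1 - 3) ((F (γ (-t))).1) t := by
    have := ((hneg.hasFDerivAt.fst).neg.sub_const 3).hasDerivAt
    simpa [F] using this
  have h2 : HasDerivAt (fun s : ℝ => (γ (-s)).2.1) (-(F (γ (-t))).2.1) t := by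
    have := (hneg.hasFDerivAt.snd.fst).hasDerivAt
    simpa [F] using this
  have h3 : HasDerivAt (fun s : ℝ => 3 - (γ (-s)).2.2) ((F (γ (-t))).2.2) t := by
    have := ((hneg.hasFDerivAt.snd.snd).const_sub 3).hasDerivAt
    simpa [F] using this
  have hprod := h1.prodMk (h2.prodMk h3)
  rw [hsym (γ (-t))]
  exact hprod
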